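/- Let γ_1^1,…,γ_1^{n_1} be a Clifford family on a complex vector space H_1 with n_1 odd, and γ_2^1,…,γ_2^{n_2} a Clifford family on H_2 with n_2 odd. Set P_1 = γ_1^1⋯γ_1^{n_1} and P_2 = γ_2^1⋯γ_2^{n_2}. Let P be the ordered product of the doubled Clifford family Γ^a = [[0, γ_1^a],[−γ_1^a, 0]] ⊗ 1 (a = 1,…,n_1) followed by Γ^{n_1+α} = [[0,1],[1,0]] ⊗ γ_2^α (α = 1,…,n_2) on (H_1 ⊕ H_1) ⊗ H_2. Then P = (−1)^{(n_1−1)/2} [[P_1, 0],[0, −P_1]] ⊗ P_2; in particular the compression of P to the first block is (−1)^{(n_1−1)/2} P_1 ⊗ P_2. -/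
import Mathlib


open TensorProduct

/-- The endomorphism of `H ⊕ H` given by the 2×2 block matrix `[[A, B], [C, D]]`
of endomorphisms of `H`. -/
noncomputable def blk {H : Type*} [AddCommGroup H] [Module ℂ H]
    (A B C D : Module.End ℂ H) : Module.End ℂ (H × H) :=
  LinearMap.prod
    (A.comp (LinearMap.fst ℂ H H) + B.comp (LinearMap.snd ℂ H H))
    (C.comp (LinearMap.fst ℂ H H) + D.comp (LinearMap.snd ℂ H H))

section Aux
variable {H : Type*} [AddCommGroup H] [Module ℂ H]

lemma blk_mul (A B C D A' B' C' D' : Module.End ℂ H) :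
    blk A B C D * blk A' B' C' D' =
      blk (A*A'+B*C') (A*B'+B*D') (C*A'+D*C') (C*B'+D*D') := by
  apply LinearMap.ext; intro x
  simp [blk, Module.End.mul_apply, map_add, Prod.ext_iff]
  constructor <;> abel

lemma blk_one : blk (1 : Module.End ℂ H) 0 0 1 = 1 := by
  apply LinearMap.ext; intro x
  simp [blk]

lemma blk_smul (c : ℂ) (A B C D : Module.End ℂ H) :
    c • blk A B C D = blk (c•A) (c•B) (c•C) (c•D) := by
  apply LinearMap.ext; intro x
  simp [blk, Prod.ext_iff, smul_add]

lemma blk_neg (A : Module.End ℂ H) : blk (-A) 0 0 (-A) = - blk A 0 0 A := by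
  apply LinearMap.ext; intro x
  simp [blk, Prod.ext_iff]

lemma blk_list (l : List (Module.End ℂ H)) :
    ((l.map fun A => blk 0 A (-A) 0).prod) =
      (if Even l.length then ((-1:ℂ)^(l.length/2)) • blk l.prod 0 0 l.prod
       else ((-1:ℂ)^(l.length/2)) • blk 0 l.prod (-(l.prod)) 0) := by
  induction l with
  | nil => simp [blk_one]
  | cons A l ih =>
    rcases Nat.even_or_odd l.length with h | h
    · obtain ⟨k, hk⟩ := h
      rw [List.map_cons, List.prod_cons, ih]
      have hlen : l.length = 2 * k := by omega
      simp only [hlen, List.length_cons]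
      rw [if_pos (by exact ⟨k, by omega⟩), if_neg (by simp [Nat.even_add_one, parity_simps])]
      have h1 : (2*k)/2 = k := by omega
      have h2 : (2*k+1)/2 = k := by omega
      rw [h1, h2, mul_smul_comm, blk_mul, List.prod_cons]
      simp
    · obtain ⟨k, hk⟩ := h
      rw [List.map_cons, List.prod_cons, ih]
      rw [if_neg (by simp [hk, parity_simps]), List.length_cons,
        if_pos (by simp [hk, parity_simps])]
      have h1 : l.length/2 = k := by omega
      have h2 : (l.length+1)/2 = k+1 := by omega
      rw [h1, h2, mul_smul_comm, blk_mul, List.prod_cons, pow_succ]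
      simp only [zero_mul, mul_zero, add_zero, zero_add, neg_mul, mul_neg_one, neg_smul]
      rw [mul_neg, blk_neg, smul_neg]
      exact (neg_smul _ _).symm
end Aux

section Aux2
variable {ι : Type*} {M N : Type*} [AddCommGroup M] [Module ℂ M] [AddCommGroup N] [Module ℂ N]

lemma tensor_map_list_prod (l : List ι) (f : ι → Module.End ℂ M) (g : ι → Module.End ℂ N) :
    ((l.map fun x => TensorProduct.map (f x) (g x)).prod)
      = TensorProduct.map ((l.map f).prod) ((l.map g).prod) := by
  induction l with
  | nil => simp [TensorProduct.map_one]
  | cons x l ih =>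
    rw [List.map_cons, List.prod_cons, ih, List.map_cons, List.map_cons,
      List.prod_cons, List.prod_cons, TensorProduct.map_mul]
end Aux2

/-- for the doubled Clifford family with both `n₁ = 2m₁+1` and
`n₂ = 2m₂+1` odd, the ordered product `P` of the doubled gamma matrices equals
`(−1)^{(n₁−1)/2} [[P₁,0],[0,−P₁]] ⊗ P₂`; in particular its compression to the first
block is `(−1)^{(n₁−1)/2} P₁ ⊗ P₂`. -/
theorem doubled_P_odd_odd
    {H₁ H₂ : Type*} [AddCommGroup H₁] [Module ℂ H₁] [AddCommGroup H₂] [Module ℂ H₂]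
    {m₁ m₂ : ℕ}
    (γ₁ : Fin (2 * m₁ + 1) → Module.End ℂ H₁) (η₁ : Fin (2 * m₁ + 1) → ℂ)
    (γ₂ : Fin (2 * m₂ + 1) → Module.End ℂ H₂) (η₂ : Fin (2 * m₂ + 1) → ℂ)
    (hη₁ : ∀ a, η₁ a = 1 ∨ η₁ a = -1)
    (hη₂ : ∀ α, η₂ α = 1 ∨ η₂ α = -1)
    (hcl₁ : ∀ a b, γ₁ a * γ₁ b + γ₁ b * γ₁ a
      = (2 * η₁ a * (if a = b then 1 else 0)) • (1 : Module.End ℂ H₁))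
    (hcl₂ : ∀ α β, γ₂ α * γ₂ β + γ₂ β * γ₂ α
      = (2 * η₂ α * (if α = β then 1 else 0)) • (1 : Module.End ℂ H₂))
    (P₁ : Module.End ℂ H₁) (hP₁ : P₁ = ((List.finRange (2 * m₁ + 1)).map γ₁).prod)
    (P₂ : Module.End ℂ H₂) (hP₂ : P₂ = ((List.finRange (2 * m₂ + 1)).map γ₂).prod)
    (P : Module.End ℂ ((H₁ × H₁) ⊗[ℂ] H₂))
    (hP : P = (((List.finRange (2 * m₁ + 1)).map fun a =>
          TensorProduct.map (blk 0 (γ₁ a) (-(γ₁ a)) 0) (1 : Module.End ℂ H₂))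
        ++ ((List.finRange (2 * m₂ + 1)).map fun α =>
          TensorProduct.map (blk 0 1 1 0) (γ₂ α))).prod) :
    P = ((-1 : ℂ) ^ m₁) • TensorProduct.map (blk P₁ 0 0 (-P₁)) P₂
    ∧ (TensorProduct.map (LinearMap.fst ℂ H₁ H₁) (LinearMap.id : H₂ →ₗ[ℂ] H₂)).comp
        (P.comp (TensorProduct.map (LinearMap.inl ℂ H₁ H₁) (LinearMap.id : H₂ →ₗ[ℂ] H₂)))
      = ((-1 : ℂ) ^ m₁) • TensorProduct.map P₁ P₂ := by
  -- the first list product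
  have e1 : (((List.finRange (2 * m₁ + 1)).map fun a =>
        TensorProduct.map (blk 0 (γ₁ a) (-(γ₁ a)) 0) (1 : Module.End ℂ H₂))).prod
      = TensorProduct.map (((-1:ℂ)^m₁) • blk 0 P₁ (-P₁) 0) 1 := by
    rw [tensor_map_list_prod (List.finRange (2 * m₁ + 1))
      (fun a => blk 0 (γ₁ a) (-(γ₁ a)) 0) (fun _ => (1 : Module.End ℂ H₂))]
    have hone : ((List.finRange (2 * m₁ + 1)).map
        (fun _ => (1 : Module.End ℂ H₂))).prod = 1 := by
      apply List.prod_eq_one; intro x hx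
      simp only [List.mem_map] at hx
      obtain ⟨a, _, ha⟩ := hx; exact ha.symm
    rw [hone]
    have := blk_list ((List.finRange (2 * m₁ + 1)).map γ₁)
    rw [List.map_map] at this
    have hlen : ((List.finRange (2 * m₁ + 1)).map γ₁).length = 2 * m₁ + 1 := by simp
    rw [hlen] at this
    rw [if_neg (by simp [parity_simps]),
      (by omega : (2 * m₁ + 1)/2 = m₁), ← hP₁] at this
    rw [← this]
    rfl
  -- the second list product
  have e2 : (((List.finRange (2 * m₂ + 1)).map fun α =>
        TensorProduct.map (blk (0 : Module.End ℂ H₁) 1 1 0) (γ₂ α))).prod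
      = TensorProduct.map (blk (0 : Module.End ℂ H₁) 1 1 0) P₂ := by
    rw [tensor_map_list_prod (List.finRange (2 * m₂ + 1))
      (fun _ => blk (0 : Module.End ℂ H₁) 1 1 0) γ₂, ← hP₂]
    have hconst : ((List.finRange (2 * m₂ + 1)).map
        (fun _ => blk (0 : Module.End ℂ H₁) 1 1 0)).prod
        = (blk (0 : Module.End ℂ H₁) 1 1 0) ^ (2 * m₂ + 1) := by
      rw [List.map_const', List.prod_replicate, List.length_finRange]
    have hsq : (blk (0 : Module.End ℂ H₁) 1 1 0) ^ 2 = 1 := by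
      rw [sq, blk_mul]; simpa using blk_one
    rw [hconst, (by ring : 2 * m₂ + 1 = 2 * m₂ + 1), pow_succ, pow_mul, hsq, one_pow, one_mul]
  have hfirst : P = ((-1 : ℂ) ^ m₁) • TensorProduct.map (blk P₁ 0 0 (-P₁)) P₂ := by
    rw [hP, List.prod_append, e1, e2, TensorProduct.map_smul_left, smul_mul_assoc,
      ← TensorProduct.map_mul, blk_mul, one_mul]
    congr 2 <;> simp
  refine ⟨hfirst, ?_⟩
  rw [hfirst, LinearMap.smul_comp, LinearMap.comp_smul, ← TensorProduct.map_comp,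
    ← TensorProduct.map_comp, LinearMap.comp_id, LinearMap.id_comp]
  congr 1
  congr 1
  apply LinearMap.ext; intro x
  simp [blk]
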